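/- Let X, Y be compact Hausdorff spaces, E, F Banach spaces over 𝕂 ∈ {ℝ, ℂ}, A a closed 𝕂-linear subspace of C(X,E), B a 𝕂-linear subspace of C(Y,F), and T : A → B a surjective real-linear isometry. If x, x' ∈ Θ(A) are distinct points, then H_x ∩ H_{x'} = ∅. -/

import Mathlib

open Set Metric

variable {𝕂 : Type*} [RCLike 𝕂]
variable {X : Type*} [TopologicalSpace X] [CompactSpace X] [T2Space X]
variable {Y : Type*} [TopologicalSpace Y] [CompactSpace Y] [T2Space Y]
variable {E : Type*} [NormedAddCommGroup E] [NormedSpace ℝ E] [NormedSpace 𝕂 E]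
  [IsScalarTower ℝ 𝕂 E] [CompleteSpace E]
variable {F : Type*} [NormedAddCommGroup F] [NormedSpace ℝ F] [NormedSpace 𝕂 F]
  [IsScalarTower ℝ 𝕂 F] [CompleteSpace F]

/-- The set `V^A_{x,K} = {f ∈ S(A) : f(x) ∈ K}`. -/
def Vset {Z M : Type*} [TopologicalSpace Z] [CompactSpace Z]
    [NormedAddCommGroup M] [NormedSpace 𝕂 M]
    (A : Subspace 𝕂 C(Z, M)) (x : Z) (K : Set M) : Set C(Z, M) :=
  {f | f ∈ A ∧ ‖f‖ = 1 ∧ f x ∈ K}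

/-- The set `Θ(A)` of strong boundary points of a set `A` of functions in `C(X,E)`. -/
def strongBoundaryPoints {Z M : Type*} [TopologicalSpace Z] [CompactSpace Z]
    [NormedAddCommGroup M] (A : Set C(Z, M)) : Set Z :=
  {x | ∀ U ∈ nhds x, ∀ ε : ℝ, 0 < ε → ∀ u : M, ‖u‖ = 1 →
    ∃ f ∈ A, ‖f‖ = 1 ∧ f x = u ∧ ∀ y, y ∉ U → ‖f y‖ < ε}

/-- `H_x`: the set of points `y ∈ Y` such that `T(V^A_{x,{u}}) ⊆ V^B_{y,{v}}`
for some unit vectors `u ∈ E` and `v ∈ F`. -/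
def Hset (T : C(X, E) → C(Y, F)) (A : Subspace 𝕂 C(X, E))
    (B : Subspace 𝕂 C(Y, F)) (x : X) : Set Y :=
  {y | ∃ u : E, ‖u‖ = 1 ∧ ∃ v : F, ‖v‖ = 1 ∧ T '' Vset A x {u} ⊆ Vset B y {v}}

set_option linter.unusedSectionVars false
set_option linter.unusedVariables false

lemma rsmul_mem' (A : Subspace 𝕂 C(X,E)) {f : C(X,E)} (hf : f ∈ A) (r : ℝ) : r • f ∈ A := by
  rw [← smul_one_smul 𝕂 r f]; exact A.smul_mem _ hf

set_option maxHeartbeats 1000000 in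
lemma peak_lemma (A : Subspace 𝕂 C(X, E)) (hA : IsClosed (A : Set C(X, E)))
    {x : X} (hx : x ∈ strongBoundaryPoints (A : Set C(X, E)))
    {u : E} (hu : ‖u‖ = 1) {q : C(X, E)} (hqA : q ∈ A) (hqx : q x = 0)
    (hq : ‖q‖ ≤ 3/4) :
    ∃ P ∈ A, P x = u ∧ ‖P‖ ≤ 1 ∧ ‖q + P‖ ≤ 1 := by
  classical
  have hW : ∀ n : ℕ, {z : X | ‖q z‖ < (3/4)^n / 2} ∈ nhds x := by
    intro n
    have hopen : IsOpen {z : X | ‖q z‖ < (3/4)^n / 2} :=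
      isOpen_lt (q.continuous.norm) continuous_const
    refine hopen.mem_nhds ?_
    simp only [Set.mem_setOf_eq, hqx, norm_zero]
    positivity
  choose p hpA hpnorm hpx hpsmall using fun n : ℕ =>
    hx {z : X | ‖q z‖ < (3/4)^n / 2} (hW n) (1/16) (by norm_num) u hu
  set c : ℕ → ℝ := fun n => (1/4) * (3/4)^n with hcdef
  have hcnn : ∀ n, 0 ≤ c n := fun n => by positivity
  have hgeo : HasSum (fun i : ℕ => ((3/4:ℝ))^i) 4 := by
    have h := hasSum_geometric_of_lt_one (show (0:ℝ) ≤ 3/4 by norm_num)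
      (show (3/4:ℝ) < 1 by norm_num)
    convert h using 1; norm_num
  have hcsum : HasSum c 1 := by
    have := hgeo.mul_left (1/4)
    convert this using 1 <;> norm_num <;> rfl
  have hnorm_eq : ∀ n, ‖c n • p n‖ = c n := by
    intro n
    rw [norm_smul, hpnorm n, Real.norm_eq_abs, abs_of_nonneg (hcnn n), mul_one]
  have hsum : Summable (fun n => c n • p n) := by
    apply Summable.of_norm
    simpa only [hnorm_eq] using hcsum.summable
  set P : C(X,E) := ∑' n, c n • p n with hPdef
  have hPsum : HasSum (fun n => c n • p n) P := hsum.hasSum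
  have hPz : ∀ z : X, HasSum (fun n => c n • p n z) (P z) := by
    intro z
    have := hPsum.map (AddMonoidHom.mk' (fun f : C(X,E) => f z) (fun f g => rfl))
      (ContinuousEvalConst.continuous_eval_const z)
    simpa [Function.comp_def] using this
  have bnd : ∀ n (z : X), ‖c n • p n z‖ ≤ c n := by
    intro n z
    rw [norm_smul, Real.norm_eq_abs, abs_of_nonneg (hcnn n)]
    calc c n * ‖p n z‖ ≤ c n * ‖p n‖ :=
          mul_le_mul_of_nonneg_left ((p n).norm_coe_le_norm z) (hcnn n)
      _ = c n := by rw [hpnorm n, mul_one]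
  have hnormsum : ∀ z : X, Summable (fun n => ‖c n • p n z‖) := fun z =>
    Summable.of_nonneg_of_le (fun n => norm_nonneg _) (fun n => bnd n z) hcsum.summable
  have hPznorm : ∀ z : X, ‖P z‖ ≤ ∑' n, ‖c n • p n z‖ := by
    intro z
    rw [← (hPz z).tsum_eq]
    exact norm_tsum_le_tsum_norm (hnormsum z)
  have hPA : P ∈ A := by
    refine hA.mem_of_tendsto hPsum.tendsto_sum_nat (Filter.Eventually.of_forall fun N => ?_)
    exact Submodule.sum_mem A fun n _ => rsmul_mem' A (hpA n) (c n)
  have hPx : P x = u := by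
    have h1 : HasSum (fun n => c n • u) (P x) := by
      have := hPz x
      simpa only [hpx] using this
    have h2 : HasSum (fun n => c n • u) ((1:ℝ) • u) := hcsum.smul_const u
    rw [one_smul] at h2
    exact h1.unique h2
  have key : ∀ z : X, ‖q z + P z‖ ≤ 1 := by
    intro z
    by_cases hcase : ∀ n : ℕ, ‖q z‖ < (3/4)^n / 2
    · have hqz0 : ‖q z‖ ≤ 0 := by
        have ht : Filter.Tendsto (fun n : ℕ => ((3/4:ℝ))^n / 2) Filter.atTop (nhds 0) := by
          have h := tendsto_pow_atTop_nhds_zero_of_lt_one (show (0:ℝ) ≤ 3/4 by norm_num)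
            (show (3/4:ℝ) < 1 by norm_num)
          simpa using h.div_const 2
        exact ge_of_tendsto ht (Filter.Eventually.of_forall fun n => (hcase n).le)
      have hqz : q z = 0 := norm_le_zero_iff.mp hqz0
      rw [hqz, zero_add]
      calc ‖P z‖ ≤ ∑' n, ‖c n • p n z‖ := hPznorm z
        _ ≤ ∑' n, c n := Summable.tsum_le_tsum (fun n => bnd n z) (hnormsum z) hcsum.summable
        _ = 1 := hcsum.tsum_eq
    · push_neg at hcase
      set N := Nat.find hcase with hNdef
      have hNspec : (3/4:ℝ)^N / 2 ≤ ‖q z‖ := Nat.find_spec hcase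
      have hsmall : ∀ n, N ≤ n → ‖p n z‖ ≤ 1/16 := by
        intro n hn
        have hle : (3/4:ℝ)^n ≤ (3/4)^N :=
          pow_le_pow_of_le_one (by norm_num) (by norm_num) hn
        have : z ∉ {z : X | ‖q z‖ < (3/4)^n / 2} := by
          simp only [Set.mem_setOf_eq, not_lt]
          linarith
        exact (hpsmall n z this).le
      have hqzb : ‖q z‖ ≤ (15/16) * (3/4)^N := by
        rcases Nat.eq_zero_or_pos N with h0 | hpos
        · rw [h0, pow_zero, mul_one]
          calc ‖q z‖ ≤ ‖q‖ := q.norm_coe_le_norm z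
            _ ≤ 3/4 := hq
            _ ≤ 15/16 := by norm_num
        · obtain ⟨M, hM⟩ := Nat.exists_eq_succ_of_ne_zero hpos.ne'
          have hMlt : ‖q z‖ < (3/4:ℝ)^M / 2 := by
            have := Nat.find_min hcase (m := M) (by omega)
            push_neg at this
            exact this
          have hMpow : (0:ℝ) ≤ (3/4)^M := by positivity
          rw [hM, pow_succ]
          nlinarith
      have htail : ∑' i : ℕ, ‖c (i + N) • p (i + N) z‖ ≤ (1/16) * (3/4)^N := by
        have hg2 : HasSum (fun i : ℕ => (((1:ℝ)/64) * (3/4)^N) * (3/4)^i)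
            ((((1:ℝ)/64) * (3/4)^N) * 4) := hgeo.mul_left (((1:ℝ)/64) * (3/4)^N)
        have hle : ∀ i : ℕ, ‖c (i + N) • p (i + N) z‖ ≤ ((1/64) * (3/4)^N) * (3/4)^i := by
          intro i
          rw [norm_smul, Real.norm_eq_abs, abs_of_nonneg (hcnn _)]
          have h1 : c (i + N) * ‖p (i + N) z‖ ≤ c (i + N) * (1/16) :=
            mul_le_mul_of_nonneg_left (hsmall (i + N) (by omega)) (hcnn _)
          calc c (i + N) * ‖p (i + N) z‖ ≤ c (i + N) * (1/16) := h1
            _ = ((1/64) * (3/4)^N) * (3/4)^i := by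
                simp only [hcdef, pow_add]; ring
        calc ∑' i : ℕ, ‖c (i + N) • p (i + N) z‖
            ≤ ∑' i : ℕ, ((1/64) * (3/4)^N) * (3/4)^i :=
              Summable.tsum_le_tsum hle ((summable_nat_add_iff N).mpr (hnormsum z)) hg2.summable
          _ = ((1/64) * (3/4)^N) * 4 := hg2.tsum_eq
          _ = (1/16) * (3/4)^N := by ring
      have hhead : ∑ i ∈ Finset.range N, ‖c i • p i z‖ ≤ 1 - (3/4)^N := by
        calc ∑ i ∈ Finset.range N, ‖c i • p i z‖ ≤ ∑ i ∈ Finset.range N, c i :=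
              Finset.sum_le_sum fun i _ => bnd i z
          _ = 1 - (3/4)^N := by
              simp only [hcdef]
              rw [← Finset.mul_sum, geom_sum_eq (by norm_num)]
              ring
      have hsplit : ∑' n, ‖c n • p n z‖ ≤ 1 - (15/16) * (3/4)^N := by
        rw [← Summable.sum_add_tsum_nat_add N (hnormsum z)]
        linarith
      calc ‖q z + P z‖ ≤ ‖q z‖ + ‖P z‖ := norm_add_le _ _
        _ ≤ (15/16) * (3/4)^N + (1 - (15/16) * (3/4)^N) := by
            have := (hPznorm z).trans hsplit
            linarith
        _ = 1 := by ring
  refine ⟨P, hPA, hPx, ?_, ?_⟩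
  · refine (ContinuousMap.norm_le _ (by norm_num)).mpr fun z => ?_
    calc ‖P z‖ ≤ ∑' n, ‖c n • p n z‖ := hPznorm z
      _ ≤ ∑' n, c n := Summable.tsum_le_tsum (fun n => bnd n z) (hnormsum z) hcsum.summable
      _ = 1 := hcsum.tsum_eq
  · refine (ContinuousMap.norm_le _ (by norm_num)).mpr fun z => ?_
    simpa using key z

/-- If `T : A → B` is a surjective real-linear isometry and `x ≠ x'` are strong
boundary points of the closed subspace `A`, then `H_x ∩ H_{x'} = ∅`. -/
theorem stmt7 (A : Subspace 𝕂 C(X, E)) (hA : IsClosed (A : Set C(X, E)))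
    (B : Subspace 𝕂 C(Y, F)) (T : C(X, E) → C(Y, F))
    (hmap : ∀ f ∈ A, T f ∈ B)
    (hsurj : ∀ g ∈ B, ∃ f ∈ A, T f = g)
    (hadd : ∀ f ∈ A, ∀ g ∈ A, T (f + g) = T f + T g)
    (hsmul : ∀ r : ℝ, ∀ f ∈ A, T (r • f) = r • T f)
    (hiso : ∀ f ∈ A, ∀ g ∈ A, ‖T f - T g‖ = ‖f - g‖)
    (x x' : X) (hx : x ∈ strongBoundaryPoints (A : Set C(X, E)))
    (hx' : x' ∈ strongBoundaryPoints (A : Set C(X, E))) (hxx' : x ≠ x') :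
    Hset T A B x ∩ Hset T A B x' = ∅ := by
  rw [Set.eq_empty_iff_forall_notMem]
  rintro y ⟨hy1, hy2⟩
  obtain ⟨u, hu, v, hv, hT1⟩ := hy1
  obtain ⟨u', hu', v', hv', hT2⟩ := hy2
  -- the function g peaked at x'
  obtain ⟨g, hgA, hgnorm, hgx', hgsmall⟩ :=
    hx' {x}ᶜ (compl_singleton_mem_nhds hxx'.symm) (1/2) (by norm_num) u' hu'
  have hgx_small : ‖g x‖ < 1/2 := hgsmall x (by simp)
  -- the correction c with c x = g x and small norm
  obtain ⟨c, hcA, hcx, hcnorm⟩ : ∃ c : C(X,E), c ∈ A ∧ c x = g x ∧ ‖c‖ ≤ ‖g x‖ := by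
    by_cases h0 : g x = 0
    · exact ⟨0, A.zero_mem, by simp [h0], by simp⟩
    · have hgxne : ‖g x‖ ≠ 0 := norm_ne_zero_iff.mpr h0
      obtain ⟨f, hfA, hfn, hfx, -⟩ := hx Set.univ Filter.univ_mem 1 one_pos
        (‖g x‖⁻¹ • g x) (by rw [norm_smul, norm_inv, norm_norm, inv_mul_cancel₀ hgxne])
      refine ⟨‖g x‖ • f, rsmul_mem' A hfA _, ?_, ?_⟩
      · rw [ContinuousMap.smul_apply, hfx, smul_inv_smul₀ hgxne]
      · rw [norm_smul, hfn, norm_norm, mul_one]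
  -- q
  set q : C(X,E) := (1/2 : ℝ) • (g - c) with hqdef
  have hgcA : g - c ∈ A := A.sub_mem hgA hcA
  have hqA : q ∈ A := rsmul_mem' A hgcA _
  have hqx : q x = 0 := by
    simp [hqdef, hcx]
  have hqn : ‖q‖ ≤ 3/4 := by
    have h1 : ‖g - c‖ ≤ 3/2 := by
      refine (norm_sub_le _ _).trans ?_
      rw [hgnorm]
      linarith [hcnorm.trans hgx_small.le]
    rw [hqdef, norm_smul]
    rw [Real.norm_eq_abs]
    rw [abs_of_nonneg (by norm_num : (0:ℝ) ≤ 1/2)]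
    linarith
  obtain ⟨P, hPA, hPx, hPn, hqPn⟩ := peak_lemma A hA hx hu hqA hqx hqn
  have hPn1 : ‖P‖ = 1 := le_antisymm hPn (by
    calc (1:ℝ) = ‖P x‖ := by rw [hPx, hu]
      _ ≤ ‖P‖ := P.norm_coe_le_norm x)
  have hhx : (q + P) x = u := by
    rw [ContinuousMap.add_apply, hqx, hPx, zero_add]
  have hhA : q + P ∈ A := A.add_mem hqA hPA
  have hhn : ‖q + P‖ = 1 := le_antisymm hqPn (by
    calc (1:ℝ) = ‖(q + P) x‖ := by rw [hhx, hu]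
      _ ≤ ‖q + P‖ := (q + P).norm_coe_le_norm x)
  -- V memberships and evaluations at y
  have h1 : T P y = v := (hT1 ⟨P, ⟨hPA, hPn1, by simp [hPx]⟩, rfl⟩).2.2
  have h2 : T (q + P) y = v := (hT1 ⟨q + P, ⟨hhA, hhn, by simp [hhx]⟩, rfl⟩).2.2
  have h3 : T g y = v' := (hT2 ⟨g, ⟨hgA, hgnorm, by simp [hgx']⟩, rfl⟩).2.2
  -- T 0 = 0
  have hT0 : T 0 = 0 := by
    have h := hsmul 0 0 A.zero_mem
    simpa using h
  -- T q y = 0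
  have h4 : T q y = 0 := by
    have h5 := congrArg (fun f : C(Y,F) => f y) (hadd q hqA P hPA)
    simp only [ContinuousMap.add_apply] at h5
    rw [h2, h1] at h5
    exact right_eq_add.mp h5
  -- T q = (1/2) • (T g - T c)
  have h6 : T (g - c) = T g - T c := by
    have hneg : T ((-1 : ℝ) • c) = (-1 : ℝ) • T c := hsmul (-1) c hcA
    have h7 : T (g + (-1 : ℝ) • c) = T g + (-1 : ℝ) • T c := by
      rw [hadd g hgA _ (rsmul_mem' A hcA _), hneg]
    simpa [sub_eq_add_neg, neg_smul, one_smul] using h7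
  have h8 : T q = (1/2 : ℝ) • (T g - T c) := by
    rw [hqdef, hsmul _ _ hgcA, h6]
  -- conclude
  have h9 : v' = T c y := by
    have h10 := congrArg (fun f : C(Y,F) => f y) h8
    simp only [ContinuousMap.smul_apply, ContinuousMap.sub_apply] at h10
    rw [h4, h3] at h10
    have h11 : v' - T c y = 0 := by
      have := h10.symm
      rw [smul_eq_zero] at this
      rcases this with h | h
      · norm_num at h
      · exact h
    exact sub_eq_zero.mp h11
  have h12 : ‖T c‖ = ‖c‖ := by
    have h := hiso c hcA 0 A.zero_mem
    simpa [hT0] using h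
  have : (1:ℝ) ≤ 1/2 := by
    calc (1:ℝ) = ‖v'‖ := hv'.symm
      _ = ‖T c y‖ := by rw [h9]
      _ ≤ ‖T c‖ := (T c).norm_coe_le_norm y
      _ = ‖c‖ := h12
      _ ≤ ‖g x‖ := hcnorm
      _ ≤ 1/2 := hgx_small.le
  linarith
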